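/- (Price of anarchy upper bound for arbitrary rules.) Let x : Γ → ℝ_{≥0}^N be any cost allocation satisfying Σ_{i∈N} x_i(T) = K_0/T_min and x_i(T) ≤ K_0/T_i for every T ∈ Γ and every i ∈ N, and set f_i(T) = H_i T_i + K_i/T_i + x_i(T). Then every Nash equilibrium T^* ∈ Γ with respect to these costs satisfies C(T^*) ≤ (3/(2√2))·√n·C(T^c). -/

import Mathlib

open Finset

noncomputable section

/-- `t` is a power-of-two (POT) value with base period `B`. -/
def IsPOT (B t : ℝ) : Prop := ∃ z : ℤ, t = (2 : ℝ) ^ z * B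

/-- Membership of an interval `t` in retailer `i`'s strategy set `Γ_i`,
given major setup cost `K0`, minor setup cost `Ki` and holding parameter `Hi`. -/
def InStrategy (B K0 Ki Hi t : ℝ) : Prop :=
  IsPOT B t ∧ Real.sqrt (Ki / (2 * Hi)) ≤ t ∧ t ≤ Real.sqrt (2 * (K0 + Ki) / Hi)

/-- `N[τ; T_{-i}] = {i} ∪ {j : T j ≤ τ}`. -/
def grp {n : ℕ} (T : Fin n → ℝ) (i : Fin n) (τ : ℝ) : Finset (Fin n) :=
  insert i (Finset.univ.filter fun j => T j ≤ τ)

/-- The set of levels `L(T) = {T j : j ∈ N}`. -/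
def levels {n : ℕ} (T : Fin n → ℝ) : Finset ℝ := Finset.image T Finset.univ

/-- `1/τ⁺`: the inverse of the smallest level larger than `τ`, with the
convention that it is `0` when no larger level exists. -/
def invSucc (L : Finset ℝ) (τ : ℝ) : ℝ :=
  if h : (L.filter fun u => τ < u).Nonempty then 1 / (L.filter fun u => τ < u).min' h
  else 0

/-- Major-setup share `x_i(T)` of retailer `i` under the weighted proportional
sharing rule with weights `w` (intended for strictly positive weights). -/
def share {n : ℕ} (K0 : ℝ) (w T : Fin n → ℝ) (i : Fin n) : ℝ :=
  ∑ τ ∈ (levels T).filter (fun τ => T i ≤ τ),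
    (1 / τ - invSucc (levels T) τ) *
      (w i / ∑ j ∈ Finset.univ.filter (fun j => T j ≤ τ), w j) * K0

/-- Major-setup share for nonnegative weights: if the order group has total
weight zero, the major setup cost is split equally among its members. -/
def shareZ {n : ℕ} (K0 : ℝ) (w T : Fin n → ℝ) (i : Fin n) : ℝ :=
  ∑ τ ∈ (levels T).filter (fun τ => T i ≤ τ),
    (1 / τ - invSucc (levels T) τ) *
      (if 0 < ∑ j ∈ Finset.univ.filter (fun j => T j ≤ τ), w j
        then w i / ∑ j ∈ Finset.univ.filter (fun j => T j ≤ τ), w j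
        else 1 / ((Finset.univ.filter fun j => T j ≤ τ) : Finset (Fin n)).card) * K0

/-- Individual cost `f_i(T) = H_i T_i + K_i / T_i + x_i(T)` under `WPS^w`. -/
def indCost {n : ℕ} (K0 : ℝ) (K H w : Fin n → ℝ) (T : Fin n → ℝ) (i : Fin n) : ℝ :=
  H i * T i + K i / T i + share K0 w T i

/-- Individual cost under the zero-weight-tolerant sharing rule. -/
def indCostZ {n : ℕ} (K0 : ℝ) (K H w : Fin n → ℝ) (T : Fin n → ℝ) (i : Fin n) : ℝ :=
  H i * T i + K i / T i + shareZ K0 w T i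

/-- System cost `C(T)`. -/
def sysCost {n : ℕ} (K0 : ℝ) (K H : Fin n → ℝ) (T : Fin n → ℝ) : ℝ :=
  (∑ i, (H i * T i + K i / T i)) + K0 / (⨅ i, T i)

/-- Nash equilibrium of the game induced by `WPS^w`. -/
def IsNE {n : ℕ} (B K0 : ℝ) (K H w : Fin n → ℝ) (T : Fin n → ℝ) : Prop :=
  (∀ i, InStrategy B K0 (K i) (H i) (T i)) ∧
  ∀ i t, InStrategy B K0 (K i) (H i) t →
    indCost K0 K H w T i ≤ indCost K0 K H w (Function.update T i t) i

/-- Nash equilibrium for the zero-weight-tolerant sharing rule. -/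
def IsNEZ {n : ℕ} (B K0 : ℝ) (K H w : Fin n → ℝ) (T : Fin n → ℝ) : Prop :=
  (∀ i, InStrategy B K0 (K i) (H i) (T i)) ∧
  ∀ i t, InStrategy B K0 (K i) (H i) t →
    indCostZ K0 K H w T i ≤ indCostZ K0 K H w (Function.update T i t) i

/-- `s = min_{∅ ⊂ S ⊆ N} (K0 + Σ_{i∈S} K_i)/(Σ_{i∈S} H_i)`. -/
def sval (n : ℕ) (K0 : ℝ) (K H : Fin n → ℝ) : ℝ :=
  sInf ((fun S : Finset (Fin n) => (K0 + ∑ i ∈ S, K i) / ∑ i ∈ S, H i) '' {S | S.Nonempty})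

/-- `[b]_POT`: the POT value `a` with `b/√2 < a ≤ √2·b`. -/
def potRound (B b : ℝ) : ℝ := (2 : ℝ) ^ (round (Real.logb 2 (b / B))) * B

/-- The optimal centralized POT policy `T^c`. -/
def Tc (n : ℕ) (B K0 : ℝ) (K H : Fin n → ℝ) (i : Fin n) : ℝ :=
  if K i ≤ sval n K0 K H * H i then potRound B (Real.sqrt (sval n K0 K H))
  else potRound B (Real.sqrt (K i / H i))

end

noncomputable section

lemma potRound_pos' {B : ℝ} (hB : 0 < B) (b : ℝ) : 0 < potRound B b := by
  unfold potRound
  exact mul_pos (zpow_pos (by norm_num) _) hB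

lemma potRound_bounds' {B b : ℝ} (hB : 0 < B) (hb : 0 < b) :
    b * (Real.sqrt 2)⁻¹ ≤ potRound B b ∧ potRound B b ≤ Real.sqrt 2 * b := by
  have hbB : 0 < b / B := div_pos hb hB
  set r := Real.logb 2 (b / B) with hr
  set z : ℤ := round r with hz
  have h2r : (2:ℝ) ^ r = b / B := Real.rpow_logb (by norm_num) (by norm_num) hbB
  have habs : |r - (z:ℝ)| ≤ 1/2 := abs_sub_round r
  obtain ⟨ha1, ha2⟩ := abs_le.1 habs
  have h1 : (z:ℝ) ≤ r + 1/2 := by linarith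
  have h2 : r + -(1/2) ≤ (z:ℝ) := by linarith
  have hpot : potRound B b = (2:ℝ) ^ ((z:ℝ)) * B := by
    rw [potRound, Real.rpow_intCast]
  have hsq : (2:ℝ) ^ ((1:ℝ)/2) = Real.sqrt 2 := (Real.sqrt_eq_rpow 2).symm
  constructor
  · have hlow : (b/B) * (Real.sqrt 2)⁻¹ ≤ (2:ℝ)^((z:ℝ)) := by
      have h := Real.rpow_le_rpow_of_exponent_le (by norm_num : (1:ℝ) ≤ 2) h2
      rwa [Real.rpow_add (by norm_num), h2r, Real.rpow_neg (by norm_num), hsq] at h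
    rw [hpot]
    have h' := mul_le_mul_of_nonneg_right hlow hB.le
    calc b * (Real.sqrt 2)⁻¹ = (b/B) * (Real.sqrt 2)⁻¹ * B := by field_simp
      _ ≤ (2:ℝ)^((z:ℝ)) * B := h'
  · have hup : (2:ℝ)^((z:ℝ)) ≤ (b/B) * Real.sqrt 2 := by
      have h := Real.rpow_le_rpow_of_exponent_le (by norm_num : (1:ℝ) ≤ 2) h1
      rwa [Real.rpow_add (by norm_num), h2r, hsq] at h
    rw [hpot]
    have h' := mul_le_mul_of_nonneg_right hup hB.le
    calc (2:ℝ)^((z:ℝ)) * B ≤ (b/B) * Real.sqrt 2 * B := h'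
      _ = Real.sqrt 2 * b := by field_simp

lemma dev_cost_le' {h M t : ℝ} (hh : 0 < h) (hM : 0 < M)
    (h1 : Real.sqrt (M / h) * (Real.sqrt 2)⁻¹ ≤ t)
    (h2 : t ≤ Real.sqrt 2 * Real.sqrt (M / h)) :
    h * t + M / t ≤ 3 / Real.sqrt 2 * Real.sqrt (h * M) := by
  have hs : (0:ℝ) < Real.sqrt 2 := Real.sqrt_pos.2 (by norm_num)
  have h22 : Real.sqrt 2 * Real.sqrt 2 = 2 := Real.mul_self_sqrt (by norm_num)
  set a := Real.sqrt (M/h) with ha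
  have hap : 0 < a := Real.sqrt_pos.2 (div_pos hM hh)
  have ha2 : a^2 = M/h := Real.sq_sqrt (by positivity)
  have hMa : M = h * a^2 := by rw [ha2]; field_simp
  have hhm : Real.sqrt (h*M) = h * a := by
    rw [hMa, show h*(h*a^2) = (h*a)^2 by ring, Real.sqrt_sq (by positivity)]
  have ht : 0 < t := lt_of_lt_of_le (by positivity) h1
  set u := a * (Real.sqrt 2)⁻¹ with hu
  have hup : 0 < u := by positivity
  have hau : a = Real.sqrt 2 * u := by rw [hu]; field_simp
  have hMu : M = 2 * h * u^2 := by rw [hMa, hau]; linear_combination (h * u^2) * h22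
  have h3u : 3 / Real.sqrt 2 * Real.sqrt (h*M) = 3 * h * u := by
    rw [hhm, hau]; field_simp
  have hu2 : t ≤ 2 * u := by
    have h2u : Real.sqrt 2 * a = 2 * u := by rw [hau]; linear_combination u * h22
    linarith
  rw [h3u]
  have key : h*t^2 + M ≤ 3*h*u*t := by
    nlinarith [mul_nonneg (mul_nonneg hh.le (sub_nonneg.2 h1)) (sub_nonneg.2 hu2), hMu]
  have hmt : (h*t + M/t) * t = h*t^2 + M := by field_simp
  have hfin : (h*t + M/t) * t ≤ (3*h*u) * t := by rw [hmt]; linarith [key]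
  exact le_of_mul_le_mul_right hfin ht

lemma POA_lower_bound' {n : ℕ} (hn : 0 < n) (K0 : ℝ) (K H T : Fin n → ℝ) (hK0 : 0 < K0)
    (hK : ∀ i, 0 ≤ K i) (hH : ∀ i, 0 < H i) (hT : ∀ i, 0 < T i) :
    2 * Real.sqrt (∑ i, H i * (K0 + K i)) ≤ sysCost K0 K H T := by
  haveI : Nonempty (Fin n) := ⟨⟨0, hn⟩⟩
  set τ := ⨅ i, T i with hτdef
  have hτle : ∀ i, τ ≤ T i := fun i => ciInf_le (Finite.bddBelow_range T) i
  obtain ⟨i0, hi0⟩ := Finite.exists_min T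
  have hτpos : 0 < τ := lt_of_lt_of_le (hT i0) (le_ciInf hi0)
  set P := ∑ i, H i * T i with hP
  set Q := ∑ i, K i / T i with hQ
  set D := K0 / τ with hD
  have hPnn : 0 ≤ P := Finset.sum_nonneg fun i _ => mul_nonneg (hH i).le (hT i).le
  have hQnn : 0 ≤ Q := Finset.sum_nonneg fun i _ => div_nonneg (hK i) (hT i).le
  have hDnn : 0 ≤ D := le_of_lt (div_pos hK0 hτpos)
  have hPQ : ∑ i, H i * K i ≤ P * Q := by
    have step : ∀ i ∈ Finset.univ, H i * K i ≤ (H i * T i) * Q := by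
      intro i _
      have hQi : K i / T i ≤ Q :=
        Finset.single_le_sum (fun j _ => div_nonneg (hK j) (hT j).le) (Finset.mem_univ i)
      have heq : H i * K i = (H i * T i) * (K i / T i) := by
        have hTne := (hT i).ne'
        field_simp
      rw [heq]
      exact mul_le_mul_of_nonneg_left hQi (mul_nonneg (hH i).le (hT i).le)
    calc ∑ i, H i * K i ≤ ∑ i, (H i * T i) * Q := Finset.sum_le_sum step
      _ = P * Q := by rw [← Finset.sum_mul]
  have hPD : K0 * ∑ i, H i ≤ P * D := by
    have hτP : τ * ∑ i, H i ≤ P := by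
      rw [Finset.mul_sum]
      refine Finset.sum_le_sum fun i _ => ?_
      have h1 := hτle i
      nlinarith [hH i]
    calc K0 * ∑ i, H i = (τ * ∑ i, H i) * D := by rw [hD]; field_simp
      _ ≤ P * D := mul_le_mul_of_nonneg_right hτP hDnn
  have hsplit : ∑ i, H i * (K0 + K i) = K0 * (∑ i, H i) + ∑ i, H i * K i := by
    rw [Finset.mul_sum, ← Finset.sum_add_distrib]
    exact Finset.sum_congr rfl fun i _ => by ring
  have hsq : ∑ i, H i * (K0 + K i) ≤ ((P + Q + D)/2)^2 := by
    rw [hsplit]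
    nlinarith [hPQ, hPD, sq_nonneg (P - Q - D), mul_nonneg hQnn hDnn]
  have hC : sysCost K0 K H T = P + Q + D := by
    unfold sysCost
    rw [Finset.sum_add_distrib, ← hτdef, ← hP, ← hQ, ← hD]
  rw [hC]
  have h2 : Real.sqrt (∑ i, H i * (K0 + K i)) ≤ (P + Q + D)/2 := by
    calc Real.sqrt (∑ i, H i * (K0 + K i)) ≤ Real.sqrt (((P + Q + D)/2)^2) :=
          Real.sqrt_le_sqrt hsq
      _ = (P + Q + D)/2 := Real.sqrt_sq (by positivity)
  linarith

end

theorem statement7 {n : ℕ} (hn : 0 < n) (B K0 : ℝ) (K H : Fin n → ℝ)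
    (hB : 0 < B) (hK0 : 0 < K0) (hK : ∀ i, 0 ≤ K i) (hH : ∀ i, 0 < H i)
    (x : (Fin n → ℝ) → Fin n → ℝ)
    (hx0 : ∀ T : Fin n → ℝ, (∀ j, InStrategy B K0 (K j) (H j) (T j)) → ∀ i, 0 ≤ x T i)
    (hxsum : ∀ T : Fin n → ℝ, (∀ j, InStrategy B K0 (K j) (H j) (T j)) →
      ∑ i, x T i = K0 / (⨅ i, T i))
    (hxub : ∀ T : Fin n → ℝ, (∀ j, InStrategy B K0 (K j) (H j) (T j)) →
      ∀ i, x T i ≤ K0 / T i)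
    (Tstar : Fin n → ℝ) (hmem : ∀ j, InStrategy B K0 (K j) (H j) (Tstar j))
    (hNE : ∀ i t, InStrategy B K0 (K i) (H i) t →
      H i * Tstar i + K i / Tstar i + x Tstar i ≤
        H i * t + K i / t + x (Function.update Tstar i t) i) :
    sysCost K0 K H Tstar ≤
      3 / (2 * Real.sqrt 2) * Real.sqrt n * sysCost K0 K H (Tc n B K0 K H) := by
  haveI : Nonempty (Fin n) := ⟨⟨0, hn⟩⟩
  have hs : (0:ℝ) < Real.sqrt 2 := Real.sqrt_pos.2 (by norm_num)
  set g : Fin n → ℝ := fun i => Real.sqrt (H i * (K0 + K i)) with hg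
  have key : ∀ i, H i * Tstar i + K i / Tstar i + x Tstar i ≤ 3 / Real.sqrt 2 * g i := by
    intro i
    have hMpos : 0 < K0 + K i := by linarith [hK i]
    set b := Real.sqrt ((K0 + K i) / H i) with hb
    have hbpos : 0 < b := Real.sqrt_pos.2 (div_pos hMpos (hH i))
    obtain ⟨hlow, hhigh⟩ := potRound_bounds' hB hbpos
    set t := potRound B b with htdef
    have ht0 : 0 < t := potRound_pos' hB b
    have hstrat : InStrategy B K0 (K i) (H i) t := by
      refine ⟨⟨round (Real.logb 2 (b / B)), htdef⟩, ?_, ?_⟩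
      · have e1 : Real.sqrt ((K0 + K i)/(2 * H i)) = b * (Real.sqrt 2)⁻¹ := by
          rw [hb, show (K0 + K i)/(2 * H i) = ((K0 + K i)/H i)/2 by ring,
             Real.sqrt_div (div_pos hMpos (hH i)).le 2, div_eq_mul_inv]
        have e0 : K i / (2 * H i) ≤ (K0 + K i)/(2 * H i) := by
          have h2H : (0:ℝ) < 2 * H i := by have := hH i; positivity
          rw [div_le_div_iff₀ h2H h2H]
          nlinarith [hK0, hH i]
        calc Real.sqrt (K i / (2 * H i)) ≤ Real.sqrt ((K0 + K i)/(2 * H i)) :=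
              Real.sqrt_le_sqrt e0
          _ = b * (Real.sqrt 2)⁻¹ := e1
          _ ≤ t := hlow
      · calc t ≤ Real.sqrt 2 * b := hhigh
          _ = Real.sqrt (2 * (K0 + K i) / H i) := by
              rw [hb, ← Real.sqrt_mul (by norm_num : (0:ℝ) ≤ 2),
                 show (2:ℝ) * ((K0 + K i)/H i) = 2 * (K0 + K i)/H i by ring]
    have hT' : ∀ j, InStrategy B K0 (K j) (H j) (Function.update Tstar i t j) := by
      intro j
      rcases eq_or_ne j i with rfl | hji
      · simpa using hstrat
      · rw [Function.update_of_ne hji]; exact hmem j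
    have hxb : x (Function.update Tstar i t) i ≤ K0 / t := by
      have h' := hxub _ hT' i
      simpa using h'
    have hdc := dev_cost_le' (hH i) hMpos hlow hhigh
    calc H i * Tstar i + K i / Tstar i + x Tstar i
        ≤ H i * t + K i / t + x (Function.update Tstar i t) i := hNE i t hstrat
      _ ≤ H i * t + K i / t + K0 / t := by linarith
      _ = H i * t + (K0 + K i) / t := by
          rw [add_assoc, ← add_div, add_comm (K i) K0]
      _ ≤ 3 / Real.sqrt 2 * Real.sqrt (H i * (K0 + K i)) := hdc
      _ = 3 / Real.sqrt 2 * g i := rfl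
  have hsum1 : ∑ i, (H i * Tstar i + K i / Tstar i + x Tstar i)
      = (∑ i, (H i * Tstar i + K i / Tstar i)) + ∑ i, x Tstar i := Finset.sum_add_distrib
  have hCstar : sysCost K0 K H Tstar = ∑ i, (H i * Tstar i + K i / Tstar i + x Tstar i) := by
    unfold sysCost
    rw [hsum1, hxsum Tstar hmem]
  have h1 : sysCost K0 K H Tstar ≤ 3 / Real.sqrt 2 * ∑ i, g i := by
    rw [hCstar, Finset.mul_sum]
    exact Finset.sum_le_sum fun i _ => key i
  have hSnn : (0:ℝ) ≤ ∑ i, H i * (K0 + K i) :=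
    Finset.sum_nonneg fun i _ => mul_nonneg (hH i).le (by linarith [hK i])
  have hgnn : 0 ≤ ∑ i, g i := Finset.sum_nonneg fun i _ => Real.sqrt_nonneg _
  have hcs : ∑ i, g i ≤ Real.sqrt n * Real.sqrt (∑ i, H i * (K0 + K i)) := by
    have h := Finset.sum_mul_sq_le_sq_mul_sq Finset.univ g (fun _ => (1:ℝ))
    simp only [mul_one, one_pow, Finset.sum_const, Finset.card_univ, Fintype.card_fin,
      nsmul_eq_mul] at h
    have hg2 : ∑ i, g i ^ 2 = ∑ i, H i * (K0 + K i) :=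
      Finset.sum_congr rfl fun i _ =>
        Real.sq_sqrt (mul_nonneg (hH i).le (by linarith [hK i]))
    have hb : (∑ i, g i) ≤ Real.sqrt ((∑ i, H i * (K0 + K i)) * n) := by
      rw [← Real.sqrt_sq hgnn]
      apply Real.sqrt_le_sqrt
      calc (∑ i, g i)^2 ≤ (∑ i, g i ^ 2) * n := h
        _ = (∑ i, H i * (K0 + K i)) * n := by rw [hg2]
    calc ∑ i, g i ≤ Real.sqrt ((∑ i, H i * (K0 + K i)) * n) := hb
      _ = Real.sqrt (∑ i, H i * (K0 + K i)) * Real.sqrt n := Real.sqrt_mul hSnn n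
      _ = Real.sqrt n * Real.sqrt (∑ i, H i * (K0 + K i)) := mul_comm _ _
  have hTcpos : ∀ i, 0 < Tc n B K0 K H i := by
    intro i
    unfold Tc
    split <;> exact potRound_pos' hB _
  have h3 := POA_lower_bound' hn K0 K H (Tc n B K0 K H) hK0 hK hH hTcpos
  set Cc := sysCost K0 K H (Tc n B K0 K H) with hCc
  have hfinal : 3 / Real.sqrt 2 * (Real.sqrt n * (Cc / 2)) = 3 / (2 * Real.sqrt 2) * Real.sqrt n * Cc := by
    field_simp
  calc sysCost K0 K H Tstar ≤ 3 / Real.sqrt 2 * ∑ i, g i := h1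
    _ ≤ 3 / Real.sqrt 2 * (Real.sqrt n * Real.sqrt (∑ i, H i * (K0 + K i))) := by
        apply mul_le_mul_of_nonneg_left hcs (by positivity)
    _ ≤ 3 / Real.sqrt 2 * (Real.sqrt n * (Cc / 2)) := by
        apply mul_le_mul_of_nonneg_left
          (mul_le_mul_of_nonneg_left (by linarith) (Real.sqrt_nonneg (n:ℝ)))
          (by positivity)
    _ = 3 / (2 * Real.sqrt 2) * Real.sqrt n * Cc := hfinal
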